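/- For every complex number s with Re(s) > 1/2, the double series Σ_{r∣6} μ(r) Σ_{c≥1, (6/r)∣c, gcd(c,r)=1} k(−r̄,0;c)·(c√r)^{−2s} converges absolutely, and (2π^{s+1}/((s−1/2)Γ(s))) · Σ_{r∣6} μ(r) Σ_{c≥1, (6/r)∣c, gcd(c,r)=1} k(−r̄,0;c)·(c√r)^{−2s} = 4π^{s+1}/((2s−1)Γ(s)(2^s−1)(3^s−1)ζ(2s)). -/

import Mathlib

open Complex Filter

/-- The ordinary Kloosterman sum `k(a, 0; c) = Σ_{0 ≤ d < c, gcd(d,c)=1} e(a·d*/c)`,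
where the first argument is given as a residue class `a : ZMod c` and `d*` is the
inverse of `d` modulo `c`.  (For `c = 0` the sum is empty.) -/
noncomputable def kloosterman0 (c : ℕ) (a : ZMod c) : ℂ :=
  ∑ d ∈ (Finset.range c).filter (fun d => Nat.Coprime d c),
    Complex.exp (2 * Real.pi * Complex.I *
      (((a * ((d : ZMod c)⁻¹)).val : ℝ) / (c : ℝ)))

/-- The `c`-th term of the inner series for a divisor `r` of `6`:
`k(−r̄, 0; c) · (c√r)^{−2s}` when `c ≥ 1`, `(6/r) ∣ c` and `gcd(c,r) = 1`, else `0`. -/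
noncomputable def innerTerm (s : ℂ) (r c : ℕ) : ℂ :=
  if 1 ≤ c ∧ (6 / r) ∣ c ∧ Nat.Coprime c r then
    kloosterman0 c (-((r : ZMod c)⁻¹)) * (((c : ℝ) * Real.sqrt r : ℝ) : ℂ) ^ (-2 * s)
  else 0


open Finset ArithmeticFunction

noncomputable def Pc (c : ℕ) : ℂ :=
  ∑ d ∈ (Finset.range c).filter (fun d => Nat.Coprime d c),
    Complex.exp (2 * Real.pi * Complex.I * (((d : ℝ)) / (c : ℝ)))

lemma sum_range_exp {n : ℕ} (hn : 1 < n) :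
    ∑ k ∈ Finset.range n, Complex.exp (2 * Real.pi * Complex.I * ((k : ℝ) / (n : ℝ))) = 0 := by
  have h0 : (n:ℕ) ≠ 0 := by omega
  have hprim := Complex.isPrimitiveRoot_exp n h0
  have := hprim.geom_sum_eq_zero hn
  rw [← this]
  refine Finset.sum_congr rfl fun k _ => ?_
  rw [← Complex.exp_nat_mul]
  congr 1
  have : (n:ℂ) ≠ 0 := Nat.cast_ne_zero.mpr h0
  push_cast
  field_simp

lemma sum_divisors_Pc {n : ℕ} (hn : 0 < n) :
    ∑ d ∈ n.divisors, Pc d = if n = 1 then 1 else 0 := by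
  rw [← Nat.sum_div_divisors n Pc]
  have key : ∀ d ∈ n.divisors, Pc (n / d) =
      ∑ k ∈ (Finset.range n).filter (fun k => n.gcd k = d),
        Complex.exp (2 * Real.pi * Complex.I * ((k : ℝ) / (n : ℝ))) := by
    intro d hd
    obtain ⟨hdvd, -⟩ := Nat.mem_divisors.mp hd
    have hd0 : 0 < d := Nat.pos_of_mem_divisors hd
    obtain ⟨m, rfl⟩ := hdvd
    have hm0 : 0 < m := by
      rcases Nat.eq_zero_or_pos m with rfl | hm0
      · simp at hn
      · exact hm0
    rw [Nat.mul_div_cancel_left m hd0]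
    refine Finset.sum_nbij' (fun j => d * j) (fun k => k / d) ?_ ?_ ?_ ?_ ?_
    · intro a ha
      simp only [mem_filter, mem_range, Nat.Coprime] at ha ⊢
      exact ⟨by exact (mul_lt_mul_iff_right₀ hd0).2 ha.1, by rw [Nat.gcd_mul_left, Nat.gcd_comm, ha.2, mul_one]⟩
    · intro b hb
      simp only [mem_filter, mem_range, Nat.Coprime] at hb ⊢
      have hdb : d ∣ b := hb.2 ▸ Nat.gcd_dvd_right _ _
      obtain ⟨q, rfl⟩ := hdb
      rw [Nat.mul_div_cancel_left q hd0]
      constructor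
      · exact (mul_lt_mul_iff_right₀ hd0).1 hb.1
      · have h2 := hb.2
        rw [Nat.gcd_mul_left, Nat.mul_eq_left hd0.ne'] at h2
        exact Nat.coprime_comm.mp h2
    · intro a _; exact Nat.mul_div_cancel_left a hd0
    · intro b hb
      simp only [mem_filter] at hb
      have hdb : d ∣ b := hb.2 ▸ Nat.gcd_dvd_right _ _
      exact Nat.mul_div_cancel' hdb
    · intro a ha
      congr 1
      have hd' : (d:ℂ) ≠ 0 := Nat.cast_ne_zero.mpr hd0.ne'
      have hm' : (m:ℂ) ≠ 0 := Nat.cast_ne_zero.mpr hm0.ne'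
      push_cast
      field_simp
  rw [Finset.sum_congr rfl key, Finset.sum_fiberwise_of_maps_to
    (fun k _ => Nat.mem_divisors.mpr ⟨Nat.gcd_dvd_left _ _, hn.ne'⟩)]
  by_cases hn1 : n = 1
  · subst hn1
    simp
  · rw [if_neg hn1, sum_range_exp (by omega)]

lemma Pc_eq_moebius {n : ℕ} (hn : 0 < n) : Pc n = ((moebius n : ℤ) : ℂ) := by
  have h := (ArithmeticFunction.sum_eq_iff_sum_mul_moebius_eq
    (f := Pc) (g := fun n => if n = 1 then (1:ℂ) else 0)).mp
    (fun n hn => sum_divisors_Pc hn) n hn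
  rw [← h]
  rw [Finset.sum_eq_single_of_mem (n, 1)
    (Nat.mem_divisorsAntidiagonal.mpr ⟨mul_one n, hn.ne'⟩)]
  · simp
  · rintro ⟨a, b⟩ hab hne
    obtain ⟨h1, h2⟩ := Nat.mem_divisorsAntidiagonal.mp hab
    have : b ≠ 1 := by
      rintro rfl
      rw [mul_one] at h1
      have ha : a = n := h1
      exact hne (by simp [ha])
    simp [this]

lemma kloosterman0_eq_Pc {c : ℕ} (hc : 0 < c) {a : ZMod c} (ha : IsUnit a) :
    kloosterman0 c a = Pc c := by
  haveI : NeZero c := ⟨hc.ne'⟩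
  have hunit : ∀ d : ℕ, d.Coprime c → IsUnit (a * ((d : ZMod c))⁻¹) := by
    intro d hd
    have h1 : IsUnit ((d : ZMod c)) := (ZMod.isUnit_iff_coprime d c).mpr hd
    exact ha.mul (IsUnit.of_mul_eq_one _ (ZMod.inv_mul_of_unit _ h1))
  have hmem : ∀ d : ℕ, d ∈ (Finset.range c).filter (fun d => Nat.Coprime d c) →
      (a * ((d : ZMod c))⁻¹).val ∈ (Finset.range c).filter (fun d => Nat.Coprime d c) := by
    intro d hd
    simp only [mem_filter, mem_range] at hd ⊢
    obtain ⟨u, hu⟩ := hunit d hd.2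
    exact ⟨ZMod.val_lt _, by rw [← hu]; exact ZMod.val_coe_unit_coprime u⟩
  have hinv : ∀ d : ℕ, d ∈ (Finset.range c).filter (fun d => Nat.Coprime d c) →
      (a * (((a * ((d : ZMod c))⁻¹).val : ℕ) : ZMod c)⁻¹).val = d := by
    intro d hd
    simp only [mem_filter, mem_range] at hd
    have h1 : IsUnit ((d : ZMod c)) := (ZMod.isUnit_iff_coprime d c).mpr hd.2
    rw [ZMod.natCast_rightInverse _]
    have hx : IsUnit (a * ((d : ZMod c))⁻¹) := hunit d hd.2
    have key : a * (a * ((d : ZMod c))⁻¹)⁻¹ = (d : ZMod c) := by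
      have h2 : (a * ((d : ZMod c))⁻¹) * (d : ZMod c) = a := by
        rw [mul_assoc, ZMod.inv_mul_of_unit _ h1, mul_one]
      have h3 : (a * ((d : ZMod c))⁻¹)⁻¹ * ((a * ((d : ZMod c))⁻¹) * (d : ZMod c))
          = (a * ((d : ZMod c))⁻¹)⁻¹ * a := by rw [h2]
      rw [← mul_assoc, ZMod.inv_mul_of_unit _ hx, one_mul] at h3
      rw [mul_comm]; exact h3.symm
    rw [key, ZMod.val_cast_of_lt hd.1]
  unfold kloosterman0 Pc
  refine Finset.sum_nbij' (fun d : ℕ => (a * ((d : ZMod c))⁻¹).val)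
    (fun d : ℕ => (a * ((d : ZMod c))⁻¹).val) hmem hmem hinv hinv ?_
  intro d _
  rfl


lemma kloosterman0_eq_moebius {c : ℕ} (hc : 0 < c) {a : ZMod c} (ha : IsUnit a) :
    kloosterman0 c a = ((moebius c : ℤ) : ℂ) :=
  (kloosterman0_eq_Pc hc ha).trans (Pc_eq_moebius hc)

lemma pow_split {s : ℂ} {r c : ℕ} (hr : 0 < r) (hc : 0 < c) :
    (((c : ℝ) * Real.sqrt r : ℝ) : ℂ) ^ (-2 * s)
      = (c : ℂ) ^ (-2 * s) * (r : ℂ) ^ (-s) := by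
  have hsq : (0:ℝ) < Real.sqrt r := Real.sqrt_pos.mpr (by exact_mod_cast hr)
  have hcC : ((c:ℝ):ℂ) = (c:ℂ) := Complex.ofReal_natCast c
  rw [Complex.ofReal_mul, mul_cpow_ofReal_nonneg (Nat.cast_nonneg c) (Real.sqrt_nonneg r), hcC]
  congr 1
  have hne : ((Real.sqrt r : ℝ) : ℂ) ≠ 0 := by exact_mod_cast hsq.ne'
  have h2 : (-2 * s) = (-s) + (-s) := by ring
  rw [h2, Complex.cpow_add _ _ hne,
    ← mul_cpow_ofReal_nonneg (Real.sqrt_nonneg r) (Real.sqrt_nonneg r),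
    ← Complex.ofReal_mul, Real.mul_self_sqrt (Nat.cast_nonneg r), Complex.ofReal_natCast]

lemma innerTerm_eq (s : ℂ) {r : ℕ} (hr : 0 < r) (c : ℕ) :
    innerTerm s r c = if 1 ≤ c ∧ (6 / r) ∣ c ∧ Nat.Coprime c r then
      ((moebius c : ℤ) : ℂ) * ((c : ℂ) ^ (-2 * s) * (r : ℂ) ^ (-s)) else 0 := by
  unfold innerTerm
  split_ifs with h
  · obtain ⟨hc, -, hcop⟩ := h
    haveI : NeZero c := ⟨by omega⟩
    have h1 : IsUnit ((r : ZMod c)) := (ZMod.isUnit_iff_coprime r c).mpr hcop.symm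
    have h2 : IsUnit (-((r : ZMod c)⁻¹)) :=
      (IsUnit.of_mul_eq_one _ (ZMod.inv_mul_of_unit _ h1)).neg
    rw [kloosterman0_eq_moebius hc h2, pow_split hr hc]
  · rfl

noncomputable def muCop (P : ℕ) : ℕ → ℂ :=
  fun n => if Nat.Coprime n P then ((moebius n : ℤ) : ℂ) else 0

lemma summable_norm_term_mu {w : ℂ} (hw : 1 < w.re) :
    Summable (fun n => ‖LSeries.term (fun n => ((moebius n : ℤ) : ℂ)) w n‖) :=
  summable_norm_iff.mpr (ArithmeticFunction.LSeriesSummable_moebius_iff.mpr hw)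

lemma norm_term_muCop_le (P : ℕ) (w : ℂ) (n : ℕ) :
    ‖LSeries.term (muCop P) w n‖ ≤ ‖LSeries.term (fun n => ((moebius n : ℤ) : ℂ)) w n‖ := by
  rcases eq_or_ne n 0 with rfl | hn
  · simp
  · rw [LSeries.term_of_ne_zero hn, LSeries.term_of_ne_zero hn]
    unfold muCop
    split_ifs
    · exact le_rfl
    · simp only [zero_div, norm_zero]
      positivity

lemma summable_term_muCop {w : ℂ} (hw : 1 < w.re) (P : ℕ) :
    Summable (LSeries.term (muCop P) w) :=
  (summable_norm_term_mu hw).of_norm_bounded (norm_term_muCop_le P w)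

lemma natCast_cpow_mul (a b : ℕ) (w : ℂ) :
    (((a * b : ℕ) : ℂ)) ^ w = (a : ℂ) ^ w * (b : ℂ) ^ w := by
  have ha : ((a:ℂ)) = ((a:ℝ):ℂ) := by push_cast; ring
  have hb : ((b:ℂ)) = ((b:ℝ):ℂ) := by push_cast; ring
  rw [Nat.cast_mul, ha, hb, mul_cpow_ofReal_nonneg (Nat.cast_nonneg a) (Nat.cast_nonneg b)]

lemma sieve_step {w : ℂ} (hw : 1 < w.re) {p P : ℕ} (hp : p.Prime) (hP : Nat.Coprime p P) :
    ∑' n, LSeries.term (muCop P) w n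
      = (1 - (p : ℂ) ^ (-w)) * ∑' n, LSeries.term (muCop (p * P)) w n := by
  have hp0 : (p : ℂ) ≠ 0 := Nat.cast_ne_zero.mpr hp.pos.ne'
  set H : ℕ → ℂ := fun n => if p ∣ n then LSeries.term (muCop P) w n else 0 with hH
  have hpt : ∀ n, LSeries.term (muCop P) w n = LSeries.term (muCop (p * P)) w n + H n := by
    intro n
    rcases eq_or_ne n 0 with rfl | hn
    · simp [hH]
    · simp only [hH]
      by_cases hpn : p ∣ n
      · rw [if_pos hpn]
        have : ¬ Nat.Coprime n (p * P) := by
          intro h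
          exact hp.ne_one ((Nat.coprime_mul_iff_right.mp h).1.symm.eq_one_of_dvd hpn)
        rw [LSeries.term_of_ne_zero hn (muCop (p*P)), show muCop (p*P) n = 0 from if_neg this,
          zero_div, zero_add]
      · rw [if_neg hpn, add_zero]
        have hcp : Nat.Coprime n p := (Nat.coprime_comm.mp (hp.coprime_iff_not_dvd.mpr hpn))
        rw [LSeries.term_of_ne_zero hn, LSeries.term_of_ne_zero hn]
        unfold muCop
        by_cases hnP : Nat.Coprime n P
        · rw [if_pos hnP, if_pos (Nat.Coprime.mul_right hcp hnP)]
        · rw [if_neg hnP, if_neg (fun h => hnP (Nat.coprime_mul_iff_right.mp h).2)]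
  have hsum_pP := summable_term_muCop hw (p * P)
  have hsumH : Summable H := by
    refine (summable_norm_term_mu hw).of_norm_bounded (fun n => ?_)
    simp only [hH]
    split_ifs
    · exact norm_term_muCop_le P w n
    · simp only [norm_zero]; positivity
  have hHsum : ∑' n, H n = (-(p:ℂ)^(-w)) * ∑' n, LSeries.term (muCop (p * P)) w n := by
    rw [← tsum_mul_left]
    refine tsum_eq_tsum_of_ne_zero_bij (fun x => p * x.1) ?_ ?_ ?_
    · intro x y h
      exact Subtype.ext (Nat.eq_of_mul_eq_mul_left hp.pos h)
    · rintro n hn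
      simp only [hH, Function.mem_support] at hn
      have hpn : p ∣ n := by by_contra h; exact hn (if_neg h)
      rw [if_pos hpn] at hn
      have hn0 : n ≠ 0 := by rintro rfl; simp at hn
      rw [LSeries.term_of_ne_zero hn0] at hn
      have hmu : muCop P n ≠ 0 := fun h => hn (by rw [h, zero_div])
      have hcop : Nat.Coprime n P := by
        by_contra h; exact hmu (if_neg h)
      have hmun : moebius n ≠ 0 := by
        intro h; exact hmu (by unfold muCop; rw [if_pos hcop, h]; simp)
      have hsq : Squarefree n := moebius_ne_zero_iff_squarefree.mp hmun
      obtain ⟨m, rfl⟩ := hpn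
      have hm0 : m ≠ 0 := by rintro rfl; simp at hn0
      have hcpm : Nat.Coprime p m := (Nat.squarefree_mul_iff.mp hsq).1
      have hsqm : Squarefree m := (Nat.squarefree_mul_iff.mp hsq).2.2
      have hmP : Nat.Coprime m P := Nat.Coprime.coprime_dvd_left (Dvd.intro_left p rfl) hcop
      have hmpP : Nat.Coprime m (p * P) :=
        Nat.Coprime.mul_right hcpm.symm hmP
      refine ⟨⟨m, ?_⟩, rfl⟩
      simp only [Function.mem_support]
      intro hgm
      rw [LSeries.term_of_ne_zero hm0] at hgm
      have : muCop (p*P) m ≠ 0 := by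
        unfold muCop
        rw [if_pos hmpP]
        exact_mod_cast moebius_ne_zero_iff_squarefree.mpr hsqm
      have hmw : (m:ℂ) ^ w ≠ 0 := by
        intro h
        rcases (cpow_eq_zero_iff _ _).mp h with ⟨h1, -⟩
        exact hm0 (Nat.cast_eq_zero.mp h1)
      exact absurd hgm (mul_ne_zero (neg_ne_zero.mpr (by
        intro h; rcases (cpow_eq_zero_iff _ _).mp h with ⟨h1, -⟩; exact hp0 h1))
        (div_ne_zero this hmw))
    · rintro ⟨m, hm⟩
      simp only [Function.mem_support] at hm
      have hm0 : m ≠ 0 := by rintro rfl; simp at hm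
      rw [LSeries.term_of_ne_zero hm0] at hm
      have hmu : muCop (p*P) m ≠ 0 := fun h => hm (by rw [h, zero_div, mul_zero])
      have hmpP : Nat.Coprime m (p * P) := by by_contra h; exact hmu (if_neg h)
      have hmun : moebius m ≠ 0 := by
        intro h; exact hmu (by unfold muCop; rw [if_pos hmpP, h]; simp)
      have hsqm : Squarefree m := moebius_ne_zero_iff_squarefree.mp hmun
      have hcpm : Nat.Coprime p m := Nat.coprime_comm.mp (Nat.coprime_mul_iff_right.mp hmpP).1
      have hmP : Nat.Coprime m P := (Nat.coprime_mul_iff_right.mp hmpP).2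
      simp only [hH]
      rw [if_pos (Dvd.intro m rfl)]
      have hpm0 : (p * m : ℕ) ≠ 0 := Nat.mul_ne_zero hp.pos.ne' hm0
      rw [LSeries.term_of_ne_zero hpm0, LSeries.term_of_ne_zero hm0]
      have hcopPM : Nat.Coprime (p * m) P := Nat.Coprime.mul hP hmP
      have h1 : muCop P (p * m) = ((moebius (p*m) : ℤ) : ℂ) := if_pos hcopPM
      have h2 : muCop (p*P) m = ((moebius m : ℤ) : ℂ) := if_pos hmpP
      rw [h1, h2]
      have h3 : moebius (p * m) = - moebius m := by
        rw [isMultiplicative_moebius.map_mul_of_coprime hcpm, moebius_apply_prime hp]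
        ring
      rw [h3, natCast_cpow_mul, cpow_neg]
      have hpw : (p:ℂ)^w ≠ 0 := by
        intro h; rcases (cpow_eq_zero_iff _ _).mp h with ⟨h1, -⟩; exact hp0 h1
      have hmw : (m:ℂ)^w ≠ 0 := by
        intro h; rcases (cpow_eq_zero_iff _ _).mp h with ⟨h1, -⟩
        exact hm0 (Nat.cast_eq_zero.mp h1)
      push_cast
      field_simp
  calc ∑' n, LSeries.term (muCop P) w n
      = ∑' n, (LSeries.term (muCop (p*P)) w n + H n) := by
        exact tsum_congr hpt
    _ = (∑' n, LSeries.term (muCop (p*P)) w n) + ∑' n, H n := Summable.tsum_add hsum_pP hsumH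
    _ = (1 - (p : ℂ) ^ (-w)) * ∑' n, LSeries.term (muCop (p * P)) w n := by
        rw [hHsum]; ring

lemma natCast_cpow_ne_zero {n : ℕ} (hn : n ≠ 0) (w : ℂ) : (n : ℂ) ^ w ≠ 0 := by
  intro h
  rcases (cpow_eq_zero_iff _ _).mp h with ⟨h1, -⟩
  exact hn (Nat.cast_eq_zero.mp h1)

lemma summable_norm_innerTerm {s : ℂ} (hs : 1 / 2 < s.re) {r : ℕ} (hr : 0 < r) :
    Summable (fun c : ℕ => ‖innerTerm s r c‖) := by
  have hw : 1 < (2 * s).re := by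
    have : (2 * s).re = 2 * s.re := by simp [Complex.mul_re]
    rw [this]; linarith
  refine Summable.of_nonneg_of_le (fun c => norm_nonneg _)
    (fun c => ?_) (((summable_norm_term_mu hw).mul_right ‖(r:ℂ)^(-s)‖))
  rw [innerTerm_eq s hr c]
  split_ifs with h
  · have hc0 : c ≠ 0 := by omega
    rw [LSeries.term_of_ne_zero hc0, neg_mul, cpow_neg]
    have heq : ((moebius c : ℤ):ℂ) * (((c:ℂ)^(2*s))⁻¹ * (r:ℂ)^(-s))
        = (((moebius c : ℤ):ℂ) / (c:ℂ)^(2*s)) * (r:ℂ)^(-s) := by ring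
    rw [heq, norm_mul]
  · simp only [norm_zero]
    positivity

lemma tsum_innerTerm (s : ℂ) (hs : 1 / 2 < s.re) {r : ℕ} (hr : r ∈ Nat.divisors 6) :
    ∑' c : ℕ, innerTerm s r c
      = ((moebius (6 / r) : ℤ) : ℂ) * (((6 / r : ℕ) : ℂ)) ^ (-2 * s) * (r : ℂ) ^ (-s) *
        ∑' n : ℕ, LSeries.term (muCop 6) (2 * s) n := by
  obtain ⟨hrdvd, -⟩ := Nat.mem_divisors.mp hr
  have hr0 : 0 < r := Nat.pos_of_mem_divisors hr
  set q : ℕ := 6 / r with hqdef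
  have hq6 : q * r = 6 := Nat.div_mul_cancel hrdvd
  have hq0 : 0 < q := by
    rcases Nat.eq_zero_or_pos q with h | h
    · rw [h] at hq6; simp at hq6
    · exact h
  have hsq6 : Squarefree (6 : ℕ) := by
    rw [show (6:ℕ) = 2*3 from rfl, Nat.squarefree_mul_iff]
    exact ⟨by norm_num, Nat.prime_two.squarefree, Nat.prime_three.squarefree⟩
  have hsqq : Squarefree q := hsq6.squarefree_of_dvd ⟨r, hq6.symm⟩
  have hqr : Nat.Coprime q r := (Nat.squarefree_mul_iff.mp (hq6.symm ▸ hsq6)).1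
  set C : ℂ := ((moebius q : ℤ) : ℂ) * ((q : ℕ) : ℂ) ^ (-2 * s) * (r : ℂ) ^ (-s) with hC
  have hC0 : C ≠ 0 := by
    refine mul_ne_zero (mul_ne_zero ?_ (natCast_cpow_ne_zero hq0.ne' _))
      (natCast_cpow_ne_zero hr0.ne' _)
    exact_mod_cast moebius_ne_zero_iff_squarefree.mpr hsqq
  rw [← tsum_mul_left]
  refine tsum_eq_tsum_of_ne_zero_bij (fun x => q * x.1) ?_ ?_ ?_
  · intro x y h
    exact Subtype.ext (Nat.eq_of_mul_eq_mul_left hq0 h)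
  · rintro c hc
    simp only [Function.mem_support] at hc
    rw [innerTerm_eq s hr0 c] at hc
    have hcond : 1 ≤ c ∧ q ∣ c ∧ Nat.Coprime c r := by
      by_contra h; exact hc (if_neg h)
    rw [if_pos hcond] at hc
    obtain ⟨hc1, ⟨m, rfl⟩, hccop⟩ := hcond
    have hmu : moebius (q * m) ≠ 0 := by
      intro h; exact hc (by rw [h]; simp)
    have hsqc : Squarefree (q * m) := moebius_ne_zero_iff_squarefree.mp hmu
    have hm0 : m ≠ 0 := by rintro rfl; simp at hc1
    have hcqm : Nat.Coprime q m := (Nat.squarefree_mul_iff.mp hsqc).1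
    have hsqm : Squarefree m := (Nat.squarefree_mul_iff.mp hsqc).2.2
    have hmr : Nat.Coprime m r := Nat.Coprime.coprime_dvd_left (Dvd.intro_left q rfl) hccop
    have hm6 : Nat.Coprime m 6 := by
      rw [← hq6]
      exact Nat.Coprime.mul_right hcqm.symm hmr
    refine ⟨⟨m, ?_⟩, rfl⟩
    simp only [Function.mem_support]
    intro hgm
    rw [LSeries.term_of_ne_zero hm0] at hgm
    have hmu6 : muCop 6 m ≠ 0 := by
      unfold muCop
      rw [if_pos hm6]
      exact_mod_cast moebius_ne_zero_iff_squarefree.mpr hsqm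
    exact absurd hgm (mul_ne_zero hC0
      (div_ne_zero hmu6 (natCast_cpow_ne_zero hm0 _)))
  · rintro ⟨m, hm⟩
    simp only [Function.mem_support] at hm
    have hm0 : m ≠ 0 := by
      rintro rfl; simp at hm
    rw [LSeries.term_of_ne_zero hm0] at hm
    have hmu6 : muCop 6 m ≠ 0 := fun h => hm (by rw [h, zero_div, mul_zero])
    have hm6 : Nat.Coprime m 6 := by by_contra h; exact hmu6 (if_neg h)
    have hmun : moebius m ≠ 0 := by
      intro h; exact hmu6 (by unfold muCop; rw [if_pos hm6, h]; simp)
    have hcqm : Nat.Coprime q m := (Nat.Coprime.coprime_dvd_right ⟨r, hq6.symm⟩ hm6).symm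
    have hmr : Nat.Coprime m r := Nat.Coprime.coprime_dvd_right hrdvd hm6
    rw [innerTerm_eq s hr0 (q * m)]
    have hcond : 1 ≤ q * m ∧ q ∣ q * m ∧ Nat.Coprime (q * m) r := by
      refine ⟨Nat.one_le_iff_ne_zero.mpr (Nat.mul_ne_zero hq0.ne' hm0), Dvd.intro m rfl, Nat.Coprime.mul hqr hmr⟩
    rw [if_pos hcond]
    have hmul : moebius (q * m) = moebius q * moebius m :=
      isMultiplicative_moebius.map_mul_of_coprime hcqm
    rw [LSeries.term_of_ne_zero hm0]
    unfold muCop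
    rw [if_pos hm6, hmul, natCast_cpow_mul, hC]
    have h1 : (m:ℂ)^(-2*s) = ((m:ℂ)^(2*s))⁻¹ := by rw [neg_mul, cpow_neg]
    rw [h1]
    push_cast
    field_simp

theorem constant_coefficient_evaluation (s : ℂ) (hs : 1 / 2 < s.re) :
    (∀ r ∈ Nat.divisors 6, Summable (fun c : ℕ => ‖innerTerm s r c‖)) ∧
    (2 * (Real.pi : ℂ) ^ (s + 1) / ((s - 1 / 2) * Complex.Gamma s)) *
        ∑ r ∈ Nat.divisors 6,
          ((ArithmeticFunction.moebius r : ℤ) : ℂ) * ∑' c : ℕ, innerTerm s r c =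
      4 * (Real.pi : ℂ) ^ (s + 1) /
        ((2 * s - 1) * Complex.Gamma s * ((2 : ℂ) ^ s - 1) * ((3 : ℂ) ^ s - 1) *
          riemannZeta (2 * s)) := by
  have hw : 1 < (2 * s).re := by
    have : (2 * s).re = 2 * s.re := by simp [Complex.mul_re]
    rw [this]; linarith
  refine ⟨fun r hr => summable_norm_innerTerm hs (Nat.pos_of_mem_divisors hr), ?_⟩
  -- T and its value
  set T : ℂ := ∑' n : ℕ, LSeries.term (muCop 6) (2 * s) n with hTdef
  set Z : ℂ := riemannZeta (2 * s) with hZdef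
  have hZ0 : Z ≠ 0 := riemannZeta_ne_zero_of_one_lt_re hw
  set u : ℂ := (2 : ℂ) ^ (-s) with hudef
  set v : ℂ := (3 : ℂ) ^ (-s) with hvdef
  -- norms of u, v
  have habs : ∀ x : ℝ, 1 < x → ‖(x : ℂ) ^ (-s)‖ < 1 := by
    intro x hx
    rw [Complex.norm_cpow_eq_rpow_re_of_pos (by linarith)]
    have : (-s).re < 0 := by simp [Complex.neg_re]; linarith
    exact Real.rpow_lt_one_of_one_lt_of_neg hx this
  have hu_abs : ‖u‖ < 1 := by
    have := habs 2 (by norm_num); rw [show ((2:ℝ):ℂ) = (2:ℂ) by norm_num] at this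
    exact this
  have hv_abs : ‖v‖ < 1 := by
    have := habs 3 (by norm_num); rw [show ((3:ℝ):ℂ) = (3:ℂ) by norm_num] at this
    exact this
  have hu0 : u ≠ 0 := by
    rw [hudef]; intro h; rcases (cpow_eq_zero_iff _ _).mp h with ⟨h1, -⟩; norm_num at h1
  have hv0 : v ≠ 0 := by
    rw [hvdef]; intro h; rcases (cpow_eq_zero_iff _ _).mp h with ⟨h1, -⟩; norm_num at h1
  have hune : ∀ w : ℂ, ‖w‖ = 1 → u ≠ w := by
    intro w hwabs h; rw [h] at hu_abs; rw [hwabs] at hu_abs; exact lt_irrefl _ hu_abs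
  have hvne : ∀ w : ℂ, ‖w‖ = 1 → v ≠ w := by
    intro w hwabs h; rw [h] at hv_abs; rw [hwabs] at hv_abs; exact lt_irrefl _ hv_abs
  have h1mu : (1 : ℂ) - u ≠ 0 := fun h => hune 1 (by simp) (by linear_combination -h)
  have h1pu : (1 : ℂ) + u ≠ 0 := fun h => hune (-1) (by simp) (by linear_combination h)
  have h1mv : (1 : ℂ) - v ≠ 0 := fun h => hvne 1 (by simp) (by linear_combination -h)
  have h1pv : (1 : ℂ) + v ≠ 0 := fun h => hvne (-1) (by simp) (by linear_combination h)
  have hG : Complex.Gamma s ≠ 0 := Complex.Gamma_ne_zero_of_re_pos (by linarith)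
  have hpi : (Real.pi : ℂ) ^ (s + 1) ≠ 0 := by
    intro h; rcases (cpow_eq_zero_iff _ _).mp h with ⟨h1, -⟩
    exact Real.pi_ne_zero (by exact_mod_cast h1)
  have hs12 : s - 1 / 2 ≠ 0 := by
    intro h; have := congrArg Complex.re h; simp at this; linarith
  have h2s1 : 2 * s - 1 ≠ 0 := by
    intro h; have := congrArg Complex.re h
    simp [Complex.sub_re, Complex.mul_re] at this; linarith
  -- powers
  have hu2 : (2 : ℂ) ^ (-2 * s) = u * u := by
    rw [show (-2 * s : ℂ) = (-s) + (-s) by ring, Complex.cpow_add _ _ (by norm_num : (2:ℂ) ≠ 0)]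
  have hv2 : (3 : ℂ) ^ (-2 * s) = v * v := by
    rw [show (-2 * s : ℂ) = (-s) + (-s) by ring, Complex.cpow_add _ _ (by norm_num : (3:ℂ) ≠ 0)]
  have h2s : (2 : ℂ) ^ s = u⁻¹ := by rw [hudef, cpow_neg, inv_inv]
  have h3s : (3 : ℂ) ^ s = v⁻¹ := by rw [hvdef, cpow_neg, inv_inv]
  -- zeta value of T
  have hmuCop1 : muCop 1 = fun n => ((moebius n : ℤ) : ℂ) := by
    funext n; unfold muCop; rw [if_pos (Nat.coprime_one_right n)]
  have hLmu : Z * ∑' n, LSeries.term (muCop 1) (2 * s) n = 1 := by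
    rw [hmuCop1, hZdef, ← ArithmeticFunction.LSeries_zeta_eq_riemannZeta hw]
    exact ArithmeticFunction.LSeries_zeta_mul_Lseries_moebius hw
  have hstep1 := sieve_step hw Nat.prime_two (Nat.coprime_one_right 2)
  have hstep2 := sieve_step hw Nat.prime_three (show Nat.Coprime 3 2 by norm_num)
  rw [show (2 * 1 : ℕ) = 2 by norm_num] at hstep1
  rw [show (3 * 2 : ℕ) = 6 by norm_num] at hstep2
  have hc2 : ((2:ℕ):ℂ) = (2:ℂ) := by norm_num
  have hc3 : ((3:ℕ):ℂ) = (3:ℂ) := by norm_num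
  have hc1 : ((1:ℕ):ℂ) = (1:ℂ) := by norm_num
  have hKey : Z * ((1 - u * u) * ((1 - v * v) * T)) = 1 := by
    have e1 : ((2:ℕ):ℂ) ^ (-(2*s)) = u * u := by
      rw [hc2, show (-(2*s):ℂ) = -2*s by ring, hu2]
    have e2 : ((3:ℕ):ℂ) ^ (-(2*s)) = v * v := by
      rw [hc3, show (-(2*s):ℂ) = -2*s by ring, hv2]
    rw [hstep1, hstep2, e1, e2, ← hTdef] at hLmu
    exact hLmu
  have hTval : T = ((1 - u * u) * ((1 - v * v) * Z))⁻¹ := by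
    refine eq_inv_of_mul_eq_one_left ?_
    linear_combination hKey
  -- evaluate the divisor sum
  rw [show Nat.divisors 6 = ({1, 2, 3, 6} : Finset ℕ) from by decide]
  rw [Finset.sum_insert (by decide), Finset.sum_insert (by decide),
    Finset.sum_insert (by decide), Finset.sum_singleton]
  rw [tsum_innerTerm s hs (show (1:ℕ) ∈ Nat.divisors 6 by decide),
    tsum_innerTerm s hs (show (2:ℕ) ∈ Nat.divisors 6 by decide),
    tsum_innerTerm s hs (show (3:ℕ) ∈ Nat.divisors 6 by decide),
    tsum_innerTerm s hs (show (6:ℕ) ∈ Nat.divisors 6 by decide)]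
  have hmu1 : moebius 1 = 1 := by simp
  have hmu2 : moebius 2 = -1 := moebius_apply_prime Nat.prime_two
  have hmu3 : moebius 3 = -1 := moebius_apply_prime Nat.prime_three
  have hmu6 : moebius 6 = 1 := by
    rw [show (6:ℕ) = 2*3 from rfl, isMultiplicative_moebius.map_mul_of_coprime (by norm_num)]
    rw [hmu2, hmu3]; norm_num
  have h6m2s : (((6:ℕ)):ℂ) ^ (-2*s) = (u*u) * (v*v) := by
    rw [show ((6:ℕ):ℂ) = (((2*3 : ℕ)):ℂ) by norm_num, natCast_cpow_mul, hc2, hc3, hu2, hv2]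
  have h6ms : (((6:ℕ)):ℂ) ^ (-s) = u * v := by
    rw [show ((6:ℕ):ℂ) = (((2*3 : ℕ)):ℂ) by norm_num, natCast_cpow_mul, hc2, hc3]
  rw [show (6/1 : ℕ) = 6 from rfl, show (6/2 : ℕ) = 3 from rfl,
    show (6/3 : ℕ) = 2 from rfl, show (6/6 : ℕ) = 1 from rfl]
  have hA : (1:ℂ) - u * u ≠ 0 := by
    rw [show (1:ℂ) - u*u = (1-u)*(1+u) from by ring]
    exact mul_ne_zero h1mu h1pu
  have hB : (1:ℂ) - v * v ≠ 0 := by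
    rw [show (1:ℂ) - v*v = (1-v)*(1+v) from by ring]
    exact mul_ne_zero h1mv h1pv
  have hui : u⁻¹ - 1 ≠ 0 := by
    intro h
    have h1 : u⁻¹ = 1 := by linear_combination h
    exact h1mu (by rw [inv_eq_one.mp h1]; ring)
  have hvi : v⁻¹ - 1 ≠ 0 := by
    intro h
    have h1 : v⁻¹ = 1 := by linear_combination h
    exact h1mv (by rw [inv_eq_one.mp h1]; ring)
  have hTval' : T = (1 - u*u)⁻¹ * ((1 - v*v)⁻¹ * Z⁻¹) := by
    rw [hTval, mul_inv, mul_inv]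
  have h2s' : (2:ℂ)^s - 1 = (1-u)/u := by rw [h2s]; field_simp
  have h3s' : (3:ℂ)^s - 1 = (1-v)/v := by rw [h3s]; field_simp
  rw [← hTdef, hmu1, hmu2, hmu3, hmu6, h6m2s, h6ms, hc1, hc2, hc3,
    one_cpow, one_cpow, hu2, hv2, ← hudef, ← hvdef, h2s', h3s', hTval']
  push_cast
  have hsum : (1 * (1 * (u * u * (v * v)) * 1 * ((1 - u * u)⁻¹ * ((1 - v * v)⁻¹ * Z⁻¹))) +
        (-1 * (-1 * (v * v) * u * ((1 - u * u)⁻¹ * ((1 - v * v)⁻¹ * Z⁻¹))) +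
          (-1 * (-1 * (u * u) * v * ((1 - u * u)⁻¹ * ((1 - v * v)⁻¹ * Z⁻¹))) +
            1 * (1 * 1 * (u * v) * ((1 - u * u)⁻¹ * ((1 - v * v)⁻¹ * Z⁻¹))))))
      = (u * v * (1 + u) * (1 + v)) / ((1 - u * u) * ((1 - v * v) * Z)) := by
    rw [div_eq_mul_inv, mul_inv, mul_inv]
    ring
  rw [hsum, div_mul_div_comm, div_eq_div_iff
    (mul_ne_zero (mul_ne_zero hs12 hG) (mul_ne_zero hA (mul_ne_zero hB hZ0)))
    (mul_ne_zero (mul_ne_zero (mul_ne_zero (mul_ne_zero h2s1 hG)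
      (div_ne_zero h1mu hu0)) (div_ne_zero h1mv hv0)) hZ0)]
  field_simp

  ring
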